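/- arXiv:1904.10532 — 9 statements merged into one kernel-verified Lean document; each statement's English description precedes it below -/
import Mathlib

section
/- A split quaternion q = q₀ + q₁i + q₂j + q₃k ∈ ℍₛ is idempotent (q² = q) if and only if q = 0, or q = 1, or q₀ = 1/2 and 1/4 + q₁² − q₂² − q₃² = 0. -/
open Quaternion

/-- The split quaternions: `ℍ[ℝ, -1, 1]`. -/
abbrev SplitQuaternion : Type := ℍ[ℝ, -1, 1]

/-- A split quaternion `q = q₀ + q₁i + q₂j + q₃k` is idempotent (`q² = q`) if and only if
`q = 0`, or `q = 1`, or `q₀ = 1/2` and `1/4 + q₁² − q₂² − q₃² = 0`. -/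
theorem split_idempotent_iff (q : SplitQuaternion) :
    q ^ 2 = q ↔
      q = 0 ∨ q = 1 ∨ (q.re = 1 / 2 ∧ 1 / 4 + q.imI ^ 2 - q.imJ ^ 2 - q.imK ^ 2 = 0) := by
  obtain ⟨a,b,c,d⟩ := q
  simp only [sq, QuaternionAlgebra.ext_iff, QuaternionAlgebra.re_mul, QuaternionAlgebra.imI_mul,
    QuaternionAlgebra.imJ_mul, QuaternionAlgebra.imK_mul, QuaternionAlgebra.re_zero,
    QuaternionAlgebra.imI_zero, QuaternionAlgebra.imJ_zero, QuaternionAlgebra.imK_zero,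
    QuaternionAlgebra.re_one, QuaternionAlgebra.imI_one, QuaternionAlgebra.imJ_one,
    QuaternionAlgebra.imK_one]
  ring_nf
  constructor
  · rintro ⟨h1,h2,h3,h4⟩
    rcases eq_or_ne a (1/2) with ha | ha
    · subst ha; right; right; exact ⟨rfl, by nlinarith⟩
    · have ht : 2*a - 1 ≠ 0 := fun h => ha (by linarith)
      have hb : b = 0 := by
        rcases mul_eq_zero.mp (show b*(2*a-1) = 0 by linarith [h2]) with h | h
        · exact h
        · exact absurd h ht
      have hc : c = 0 := by
        rcases mul_eq_zero.mp (show c*(2*a-1) = 0 by linarith [h3]) with h | h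
        · exact h
        · exact absurd h ht
      have hd : d = 0 := by
        rcases mul_eq_zero.mp (show d*(2*a-1) = 0 by linarith [h4]) with h | h
        · exact h
        · exact absurd h ht
      subst hb; subst hc; subst hd
      rcases mul_eq_zero.mp (show a*(a-1) = 0 by nlinarith) with h | h
      · left; exact ⟨h, rfl, rfl, rfl⟩
      · right; left; exact ⟨by linarith, rfl, rfl, rfl⟩
  · rintro (⟨h1,h2,h3,h4⟩|⟨h1,h2,h3,h4⟩|⟨h1,h2⟩) <;>
      subst h1 <;> [skip; skip; skip] <;>
      first
        | (subst h2; subst h3; subst h4; norm_num)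
        | (refine ⟨by nlinarith, by ring, by ring, by ring⟩)
end

section
/- Let n ≥ 2 be an integer, r > 0 a real number, α, β ∈ [0, 2π), and let q = r·((cos α + (sin α)·i) + (cos β + (sin β)·i)·j) ∈ ℍₛ (a lightlike split quaternion). (1) If cos α > 0, or if cos α < 0 and n is odd, then (2 cos α)^{n−1} > 0 and the split quaternion w = (r/(2 cos α)^{n−1})^{1/n} · ((cos α + (sin α)·i) + (cos β + (sin β)·i)·j) (with the positive real n-th root) satisfies wⁿ = q. (2) If cos α > 0 and n is even, then also (−w)ⁿ = q. -/
open Quaternion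

/-- The imaginary unit `i` of the split quaternions. -/
def qi : SplitQuaternion := ⟨0, 1, 0, 0⟩

/-- The imaginary unit `j` of the split quaternions. -/
def qj : SplitQuaternion := ⟨0, 0, 1, 0⟩

/-- `cos θ + (sin θ)·i ∈ ℍₛ`. -/
noncomputable def eθ (θ : ℝ) : SplitQuaternion :=
  ((Real.cos θ : ℝ) : SplitQuaternion) + (Real.sin θ : ℝ) • qi

lemma u_sq (α β : ℝ) :
    (eθ α + eθ β * qj) * (eθ α + eθ β * qj)
      = (2 * Real.cos α) • (eθ α + eθ β * qj) := by
  have hα := Real.sin_sq_add_cos_sq α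
  have hβ := Real.sin_sq_add_cos_sq β
  ext <;> simp [eθ, qi, qj, QuaternionAlgebra.ext_iff] <;> nlinarith

lemma u_pow (α β : ℝ) (n : ℕ) (hn : 1 ≤ n) :
    (eθ α + eθ β * qj) ^ n
      = ((2 * Real.cos α) ^ (n - 1)) • (eθ α + eθ β * qj) := by
  induction n with
  | zero => omega
  | succ m ih =>
    rcases Nat.eq_or_lt_of_le hn with h | h
    · simp [← h]
    · have hm : 1 ≤ m := by omega
      rw [pow_succ, ih hm, smul_mul_assoc, u_sq, smul_smul]
      have : m - 1 + 1 = m := by omega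
      rw [← pow_succ, this]
      simp [Nat.succ_sub_one]

/-- Roots of a lightlike split quaternion `q = r((cos α + sin α i) + (cos β + sin β i)j)`:
if `cos α > 0`, or `cos α < 0` and `n` is odd, then `(2 cos α)^(n−1) > 0` and
`w = (r/(2 cos α)^(n−1))^(1/n) ((cos α + sin α i) + (cos β + sin β i)j)` satisfies `wⁿ = q`;
and if `cos α > 0` and `n` is even, then also `(−w)ⁿ = q`. -/
theorem roots_of_lightlike (n : ℕ) (hn : 2 ≤ n) (r : ℝ) (hr : 0 < r) (α β : ℝ)
    (hα : α ∈ Set.Ico 0 (2 * Real.pi)) (hβ : β ∈ Set.Ico 0 (2 * Real.pi))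
    (q w : SplitQuaternion)
    (hq : q = r • (eθ α + eθ β * qj))
    (hw : w = ((r / (2 * Real.cos α) ^ (n - 1)) ^ ((n : ℝ)⁻¹) : ℝ) • (eθ α + eθ β * qj)) :
    ((0 < Real.cos α ∨ (Real.cos α < 0 ∧ Odd n)) →
        0 < (2 * Real.cos α) ^ (n - 1) ∧ w ^ n = q) ∧
      ((0 < Real.cos α ∧ Even n) → (-w) ^ n = q) := by
  have hn0 : (n : ℝ) ≠ 0 := by positivity
  have key : ∀ _ : 0 < (2 * Real.cos α) ^ (n - 1), w ^ n = q := by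
    intro hpos
    have hx : 0 < r / (2 * Real.cos α) ^ (n - 1) := div_pos hr hpos
    have hc : (((r / (2 * Real.cos α) ^ (n - 1)) ^ ((n : ℝ)⁻¹) : ℝ)) ^ n
        = r / (2 * Real.cos α) ^ (n - 1) := by
      rw [← Real.rpow_natCast ((r / (2 * Real.cos α) ^ (n - 1)) ^ ((n : ℝ)⁻¹)) n,
        ← Real.rpow_mul hx.le, inv_mul_cancel₀ hn0, Real.rpow_one]
    rw [hw, smul_pow, u_pow α β n (by omega), smul_smul, hc, hq,
      div_mul_cancel₀ _ (ne_of_gt hpos)]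
  constructor
  · rintro (h | ⟨h, hodd⟩)
    · have hpos : 0 < (2 * Real.cos α) ^ (n - 1) := pow_pos (by linarith) _
      exact ⟨hpos, key hpos⟩
    · have heven : Even (n - 1) := Nat.Odd.sub_odd hodd odd_one
      have hpos : 0 < (2 * Real.cos α) ^ (n - 1) :=
        heven.pow_pos (by linarith)
      exact ⟨hpos, key hpos⟩
  · rintro ⟨h, heven⟩
    rw [heven.neg_pow]
    exact key (pow_pos (by linarith) _)
end

section
/- Let n ≥ 2 be an integer, r > 0 a real number, α, β ∈ [0, 2π), and let q = r·((cos α + (sin α)·i) + (cos β + (sin β)·i)·j) ∈ ℍₛ. If cos α = 0, or if cos α < 0 and n is even, then there exists no w ∈ ℍₛ with wⁿ = q. -/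
open Quaternion

def Nq (w : SplitQuaternion) : ℝ := w.re^2 + w.imI^2 - w.imJ^2 - w.imK^2

lemma Nq_mul (a b : SplitQuaternion) : Nq (a * b) = Nq a * Nq b := by
  simp only [Nq, QuaternionAlgebra.re_mul, QuaternionAlgebra.imI_mul,
    QuaternionAlgebra.imJ_mul, QuaternionAlgebra.imK_mul]
  ring

lemma Nq_pow (w : SplitQuaternion) (n : ℕ) : Nq (w ^ n) = Nq w ^ n := by
  induction n with
  | zero => simp [Nq]
  | succ k ih => rw [pow_succ, Nq_mul, ih, pow_succ]

lemma sq_of_Nq_zero (w : SplitQuaternion) (h : Nq w = 0) :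
    w ^ 2 = (2 * w.re) • w := by
  have h' : w.re^2 + w.imI^2 - w.imJ^2 - w.imK^2 = 0 := h
  ext <;>
    simp only [pow_two, QuaternionAlgebra.re_mul, QuaternionAlgebra.imI_mul,
      QuaternionAlgebra.imJ_mul, QuaternionAlgebra.imK_mul, QuaternionAlgebra.re_smul,
      QuaternionAlgebra.imI_smul, QuaternionAlgebra.imJ_smul, QuaternionAlgebra.imK_smul,
      smul_eq_mul] <;>
    nlinarith [h']

lemma pow_of_Nq_zero (w : SplitQuaternion) (h : Nq w = 0) (n : ℕ) :
    w ^ (n + 1) = ((2 * w.re) ^ n) • w := by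
  induction n with
  | zero => simp
  | succ k ih =>
    rw [pow_succ, ih, smul_mul_assoc, ← sq, sq_of_Nq_zero w h, smul_smul, ← pow_succ]

/-- Nonexistence of roots of a lightlike split quaternion
`q = r((cos α + sin α i) + (cos β + sin β i)j)`: if `cos α = 0`, or `cos α < 0` and `n` is
even, then `q` has no `n`-th root in `ℍₛ`. -/
theorem no_roots_of_lightlike (n : ℕ) (hn : 2 ≤ n) (r : ℝ) (hr : 0 < r) (α β : ℝ)
    (hα : α ∈ Set.Ico 0 (2 * Real.pi)) (hβ : β ∈ Set.Ico 0 (2 * Real.pi))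
    (q : SplitQuaternion) (hq : q = r • (eθ α + eθ β * qj))
    (h : Real.cos α = 0 ∨ (Real.cos α < 0 ∧ Even n)) :
    ¬∃ w : SplitQuaternion, w ^ n = q := by
  rintro ⟨w, hw⟩
  have hq' : q = ⟨r * Real.cos α, r * Real.sin α, r * Real.cos β, r * Real.sin β⟩ := by
    rw [hq]
    ext <;>
      simp [eθ, qi, qj, QuaternionAlgebra.re_mul, QuaternionAlgebra.imI_mul,
        QuaternionAlgebra.imJ_mul, QuaternionAlgebra.imK_mul] <;> ring
  have hNq : Nq q = 0 := by
    simp only [hq', Nq]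
    nlinarith [Real.sin_sq_add_cos_sq α, Real.sin_sq_add_cos_sq β]
  have hn0 : n ≠ 0 := by omega
  have hNw : Nq w = 0 := by
    have := Nq_pow w n
    rw [hw, hNq] at this
    exact pow_eq_zero_iff hn0 |>.mp this.symm
  obtain ⟨m, rfl⟩ : ∃ m, n = m + 1 := ⟨n - 1, by omega⟩
  have hkey : q = ((2 * w.re) ^ m) • w := by rw [← hw, pow_of_Nq_zero w hNw]
  have hre : r * Real.cos α = (2 * w.re) ^ m * w.re := by
    have := congrArg QuaternionAlgebra.re hkey
    simpa [hq'] using this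
  have hm1 : 1 ≤ m := by omega
  rcases h with hc | ⟨hc, hev⟩
  · -- cos α = 0
    have h0 : (2 * w.re) ^ m * w.re = 0 := by rw [← hre, hc]; ring
    have hre0 : w.re = 0 := by
      rcases mul_eq_zero.mp h0 with h' | h'
      · exact by
          have := pow_eq_zero_iff (by omega : m ≠ 0) |>.mp h'
          linarith
      · exact h'
    have hq0 : q = 0 := by
      rw [hkey, hre0]
      simp [zero_pow (by omega : m ≠ 0)]
    have : r * Real.sin α = 0 := by
      have := congrArg QuaternionAlgebra.imI hq0
      simpa [hq'] using this
    have hs : Real.sin α = 0 := by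
      rcases mul_eq_zero.mp this with h' | h'
      · linarith
      · exact h'
    have := Real.sin_sq_add_cos_sq α
    rw [hs, hc] at this
    norm_num at this
  · -- cos α < 0, n even
    have hlt : r * Real.cos α < 0 := mul_neg_of_pos_of_neg hr hc
    have heq : (2 * w.re) ^ m * w.re = 2 ^ m * w.re ^ (m + 1) := by
      rw [mul_pow, pow_succ]; ring
    have hge : 0 ≤ 2 ^ m * w.re ^ (m + 1) := by
      apply mul_nonneg (by positivity)
      exact hev.pow_nonneg _
    rw [hre, heq] at hlt
    linarith
end

section
/- For every a, b ∈ ℍₛ, with a⁺, b⁺ the Moore–Penrose inverses of a and b, the 4×4 real matrices L(a), R(b) satisfy the four Penrose equations: L(a)L(a⁺)L(a) = L(a), L(a⁺)L(a)L(a⁺) = L(a⁺), and L(a)L(a⁺), L(a⁺)L(a) are symmetric matrices; similarly R(b)R(b⁺)R(b) = R(b), R(b⁺)R(b)R(b⁺) = R(b⁺), and R(b)R(b⁺), R(b⁺)R(b) are symmetric. Moreover the product M = L(a)R(b) and N = L(a⁺)R(b⁺) satisfy MNM = M, NMN = N, and MN, NM are symmetric (so L(a)⁺ = L(a⁺), R(b)⁺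 = R(b⁺), (L(a)R(b))⁺ = L(a⁺)R(b⁺) as Moore–Penrose inverses). -/
open Quaternion Matrix
open scoped Classical

/-- `I_a = a * ā = a₀² + a₁² − a₂² − a₃²`, as a real scalar. -/
def Iq (a : SplitQuaternion) : ℝ := a.re ^ 2 + a.imI ^ 2 - a.imJ ^ 2 - a.imK ^ 2

/-- The Moore–Penrose inverse of a split quaternion `a = c₁ + c₂j`: `0` if `a = 0`;
`ā / I_a` if `I_a ≠ 0`; and `(c̄₁ + c₂j)/(4|c₁|²)` if `a ≠ 0` and `I_a = 0`. -/
noncomputable def mp (a : SplitQuaternion) : SplitQuaternion :=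
  if a = 0 then 0
  else if Iq a ≠ 0 then (Iq a)⁻¹ • star a
  else (4 * (a.re ^ 2 + a.imI ^ 2))⁻¹ • (⟨a.re, -a.imI, a.imJ, a.imK⟩ : SplitQuaternion)

/-- The matrix of left multiplication by `a` on `ℍₛ` in the basis `(1, i, j, k)`. -/
def Lm (a : SplitQuaternion) : Matrix (Fin 4) (Fin 4) ℝ :=
  !![a.re, -a.imI, a.imJ, a.imK;
     a.imI, a.re, a.imK, -a.imJ;
     a.imJ, a.imK, a.re, -a.imI;
     a.imK, -a.imJ, a.imI, a.re]

/-- The matrix of right multiplication by `a` on `ℍₛ` in the basis `(1, i, j, k)`. -/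
def Rm (a : SplitQuaternion) : Matrix (Fin 4) (Fin 4) ℝ :=
  !![a.re, -a.imI, a.imJ, a.imK;
     a.imI, a.re, -a.imK, a.imJ;
     a.imJ, -a.imK, a.re, a.imI;
     a.imK, a.imJ, -a.imI, a.re]

def qflip (x : SplitQuaternion) : SplitQuaternion := ⟨x.re, -x.imI, x.imJ, x.imK⟩

lemma qflip_of_imI (p : SplitQuaternion) (h : p.imI = 0) : qflip p = p := by
  ext <;> simp [qflip, h]

lemma deg_key (a : SplitQuaternion) (hI : Iq a = 0) :
    a * qflip a * a = (4 * (a.re ^ 2 + a.imI ^ 2)) • a := by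
  have hI' : a.re ^ 2 + a.imI ^ 2 - a.imJ ^ 2 - a.imK ^ 2 = 0 := hI
  ext <;>
    simp [qflip, QuaternionAlgebra.re_mul, QuaternionAlgebra.imI_mul,
      QuaternionAlgebra.imJ_mul, QuaternionAlgebra.imK_mul]
  · linear_combination (-3 * a.re) * hI'
  · linear_combination (-3 * a.imI) * hI'
  · linear_combination (-a.imJ) * hI'
  · linear_combination (-a.imK) * hI'

lemma imI_mul_qflip (a : SplitQuaternion) : (a * qflip a).imI = 0 := by
  simp [qflip, QuaternionAlgebra.imI_mul]; ring

lemma imI_qflip_mul (a : SplitQuaternion) : (qflip a * a).imI = 0 := by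
  simp [qflip, QuaternionAlgebra.imI_mul]; ring

lemma mul_star_q (a : SplitQuaternion) : a * star a = (Iq a) • (1 : SplitQuaternion) := by
  ext <;>
    simp [Iq, QuaternionAlgebra.re_mul, QuaternionAlgebra.imI_mul,
      QuaternionAlgebra.imJ_mul, QuaternionAlgebra.imK_mul] <;> ring

lemma star_mul_q (a : SplitQuaternion) : star a * a = (Iq a) • (1 : SplitQuaternion) := by
  ext <;>
    simp [Iq, QuaternionAlgebra.re_mul, QuaternionAlgebra.imI_mul,
      QuaternionAlgebra.imJ_mul, QuaternionAlgebra.imK_mul] <;> ring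

lemma mp_ident (a : SplitQuaternion) :
    a * mp a * a = a ∧ mp a * a * mp a = mp a ∧
      qflip (a * mp a) = a * mp a ∧ qflip (mp a * a) = mp a * a := by
  by_cases h0 : a = 0
  · subst h0
    simp [mp]
    ext <;> simp [qflip]
  by_cases hI : Iq a = 0
  · -- degenerate case
    have hmp : mp a = (4 * (a.re ^ 2 + a.imI ^ 2))⁻¹ • qflip a := by
      simp [mp, h0, hI, qflip]
    set n : ℝ := 4 * (a.re ^ 2 + a.imI ^ 2) with hn
    have hn0 : n ≠ 0 := by
      intro h
      have h1 : a.re ^ 2 + a.imI ^ 2 = 0 := by linarith [hn ▸ h]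
      have hre : a.re = 0 := by nlinarith [sq_nonneg a.re, sq_nonneg a.imI]
      have himI : a.imI = 0 := by nlinarith [sq_nonneg a.re, sq_nonneg a.imI]
      have hI' : a.re ^ 2 + a.imI ^ 2 - a.imJ ^ 2 - a.imK ^ 2 = 0 := hI
      have himJ : a.imJ = 0 := by nlinarith [sq_nonneg a.imJ, sq_nonneg a.imK]
      have himK : a.imK = 0 := by nlinarith [sq_nonneg a.imJ, sq_nonneg a.imK]
      exact h0 (by ext <;> simp [hre, himI, himJ, himK])
    have hfq : qflip (qflip a) = a := by ext <;> simp [qflip]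
    have hIf : Iq (qflip a) = 0 := by
      have : Iq (qflip a) = Iq a := by simp [Iq, qflip]
      rw [this, hI]
    have hkey : a * qflip a * a = n • a := deg_key a hI
    have hkey2 : qflip a * a * qflip a = n • qflip a := by
      have := deg_key (qflip a) hIf
      rw [hfq] at this
      simpa [qflip, hn] using this
    refine ⟨?_, ?_, ?_, ?_⟩
    · rw [hmp, mul_smul_comm, smul_mul_assoc, hkey, smul_smul, inv_mul_cancel₀ hn0, one_smul]
    · rw [hmp, smul_mul_assoc, smul_mul_assoc, mul_smul_comm, hkey2, smul_smul, smul_smul]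
      congr 1
      field_simp
    · apply qflip_of_imI
      rw [hmp, mul_smul_comm]
      simp [imI_mul_qflip a]
    · apply qflip_of_imI
      rw [hmp, smul_mul_assoc]
      simp [imI_qflip_mul a]
  · -- nondegenerate case
    have hmp : mp a = (Iq a)⁻¹ • star a := by simp [mp, h0, hI]
    have h1 : a * mp a = 1 := by
      rw [hmp, mul_smul_comm, mul_star_q, smul_smul, inv_mul_cancel₀ hI, one_smul]
    have h2 : mp a * a = 1 := by
      rw [hmp, smul_mul_assoc, star_mul_q, smul_smul, inv_mul_cancel₀ hI, one_smul]
    refine ⟨by rw [h1, one_mul], by rw [h2, one_mul], ?_, ?_⟩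
    · rw [h1]; exact qflip_of_imI 1 (by simp)
    · rw [h2]; exact qflip_of_imI 1 (by simp)

lemma Lm_mul (x y : SplitQuaternion) : Lm (x * y) = Lm x * Lm y := by
  ext i j
  fin_cases i <;> fin_cases j <;>
    simp [Lm, Matrix.mul_apply, Fin.sum_univ_four, QuaternionAlgebra.re_mul,
      QuaternionAlgebra.imI_mul, QuaternionAlgebra.imJ_mul, QuaternionAlgebra.imK_mul] <;> ring

lemma Rm_mul (x y : SplitQuaternion) : Rm (x * y) = Rm y * Rm x := by
  ext i j
  fin_cases i <;> fin_cases j <;>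
    simp [Rm, Matrix.mul_apply, Fin.sum_univ_four, QuaternionAlgebra.re_mul,
      QuaternionAlgebra.imI_mul, QuaternionAlgebra.imJ_mul, QuaternionAlgebra.imK_mul] <;> ring

lemma Lm_Rm_comm (x y : SplitQuaternion) : Lm x * Rm y = Rm y * Lm x := by
  ext i j
  fin_cases i <;> fin_cases j <;>
    simp [Lm, Rm, Matrix.mul_apply, Fin.sum_univ_four] <;> ring

lemma Lm_transpose (x : SplitQuaternion) : (Lm x)ᵀ = Lm (qflip x) := by
  ext i j
  fin_cases i <;> fin_cases j <;> simp [Lm, qflip]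

lemma Rm_transpose (x : SplitQuaternion) : (Rm x)ᵀ = Rm (qflip x) := by
  ext i j
  fin_cases i <;> fin_cases j <;> simp [Rm, qflip]

lemma LR_mul (x y z w : SplitQuaternion) :
    (Lm x * Rm y) * (Lm z * Rm w) = Lm (x * z) * Rm (w * y) := by
  rw [Lm_mul, Rm_mul]
  rw [mul_assoc, ← mul_assoc (Rm y), ← Lm_Rm_comm, mul_assoc, ← mul_assoc]

/-- The matrices `L(a)`, `R(b)` and `L(a)R(b)` satisfy the four Penrose equations with
`L(a⁺)`, `R(b⁺)` and `L(a⁺)R(b⁺)` respectively; that is, `L(a)⁺ = L(a⁺)`,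
`R(b)⁺ = R(b⁺)`, and `(L(a)R(b))⁺ = L(a⁺)R(b⁺)`. -/
theorem penrose_equations_Lm_Rm (a b : SplitQuaternion) :
    (Lm a * Lm (mp a) * Lm a = Lm a ∧ Lm (mp a) * Lm a * Lm (mp a) = Lm (mp a) ∧
      (Lm a * Lm (mp a))ᵀ = Lm a * Lm (mp a) ∧ (Lm (mp a) * Lm a)ᵀ = Lm (mp a) * Lm a) ∧
    (Rm b * Rm (mp b) * Rm b = Rm b ∧ Rm (mp b) * Rm b * Rm (mp b) = Rm (mp b) ∧
      (Rm b * Rm (mp b))ᵀ = Rm b * Rm (mp b) ∧ (Rm (mp b) * Rm b)ᵀ = Rm (mp b) * Rm b) ∧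
    (Lm a * Rm b * (Lm (mp a) * Rm (mp b)) * (Lm a * Rm b) = Lm a * Rm b ∧
      Lm (mp a) * Rm (mp b) * (Lm a * Rm b) * (Lm (mp a) * Rm (mp b)) =
        Lm (mp a) * Rm (mp b) ∧
      (Lm a * Rm b * (Lm (mp a) * Rm (mp b)))ᵀ = Lm a * Rm b * (Lm (mp a) * Rm (mp b)) ∧
      (Lm (mp a) * Rm (mp b) * (Lm a * Rm b))ᵀ = Lm (mp a) * Rm (mp b) * (Lm a * Rm b)) := by
  obtain ⟨ha1, ha2, ha3, ha4⟩ := mp_ident a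
  obtain ⟨hb1, hb2, hb3, hb4⟩ := mp_ident b
  refine ⟨⟨?_, ?_, ?_, ?_⟩, ⟨?_, ?_, ?_, ?_⟩, ?_, ?_, ?_, ?_⟩
  · rw [← Lm_mul, ← Lm_mul, ha1]
  · rw [← Lm_mul, ← Lm_mul, ha2]
  · rw [← Lm_mul, Lm_transpose, ha3]
  · rw [← Lm_mul, Lm_transpose, ha4]
  · rw [← Rm_mul, ← Rm_mul, ← mul_assoc, hb1]
  · rw [← Rm_mul, ← Rm_mul, ← mul_assoc, hb2]
  · rw [← Rm_mul, Rm_transpose, hb4]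
  · rw [← Rm_mul, Rm_transpose, hb3]
  · rw [LR_mul, LR_mul, ← mul_assoc b, ha1, hb1]
  · rw [LR_mul, LR_mul, ← mul_assoc (mp b), ha2, hb2]
  · rw [LR_mul, Matrix.transpose_mul, Lm_transpose, Rm_transpose, ha3, hb4, Lm_Rm_comm]
  · rw [LR_mul, Matrix.transpose_mul, Lm_transpose, Rm_transpose, ha4, hb3, Lm_Rm_comm]
end

section
/- Let a = c₁ + c₂j and b = u₁ + u₂j be nonzero lightlike split quaternions (c₁, c₂, u₁, u₂ ∈ ℂ, so c₁ ≠ 0 and u₁ ≠ 0), and let d ∈ ℍₛ. Then the equation a x b = d has a solution x ∈ ℍₛ if and only if (1 + (c₂/c̄₁) j) · d · (1 + (u₂/u₁) j) = 4d; and in that case the set of all solutions is exactly { c̄₁ d ū₁ / (4|c₁|²|u₁|²) + y − (1/4)(1 + (c₂/c₁) j) · y · (1 + (u₂/ū₁) j) : y ∈ ℍₛ }. -/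
open Quaternion

/-- The embedding `ℂ = ℝ + ℝi ⊂ ℍₛ`. -/
def toQ (z : ℂ) : SplitQuaternion := ⟨z.re, z.im, 0, 0⟩

local notation "K" => starRingEnd ℂ

lemma toQ_mul (z w : ℂ) : toQ (z * w) = toQ z * toQ w := by
  ext <;> simp [toQ, QuaternionAlgebra.re_mul, QuaternionAlgebra.imI_mul,
    QuaternionAlgebra.imJ_mul, QuaternionAlgebra.imK_mul] <;> ring

lemma toQ_one : toQ 1 = 1 := by ext <;> simp [toQ]

lemma L1 (p z w : ℂ) : (toQ p * qj) * (toQ z + toQ w * qj)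
    = toQ (p * K w) + toQ (p * K z) * qj := by
  ext <;> simp [toQ, qj, QuaternionAlgebra.re_mul, QuaternionAlgebra.imI_mul,
    QuaternionAlgebra.imJ_mul, QuaternionAlgebra.imK_mul] <;> ring

lemma L2 (p z w : ℂ) : (toQ z + toQ w * qj) * (toQ p * qj)
    = toQ (w * K p) + toQ (z * p) * qj := by
  ext <;> simp [toQ, qj, QuaternionAlgebra.re_mul, QuaternionAlgebra.imI_mul,
    QuaternionAlgebra.imJ_mul, QuaternionAlgebra.imK_mul] <;> ring

lemma L4 (p z : ℂ) : (toQ p * qj) * toQ z = toQ (p * K z) * qj := by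
  ext <;> simp [toQ, qj, QuaternionAlgebra.re_mul, QuaternionAlgebra.imI_mul,
    QuaternionAlgebra.imJ_mul, QuaternionAlgebra.imK_mul] <;> ring

lemma L5 (p z : ℂ) : toQ z * (toQ p * qj) = toQ (z * p) * qj := by
  ext <;> simp [toQ, qj, QuaternionAlgebra.re_mul, QuaternionAlgebra.imI_mul,
    QuaternionAlgebra.imJ_mul, QuaternionAlgebra.imK_mul] <;> ring

lemma toQ_ofReal (r : ℝ) : toQ (r : ℂ) = r • (1 : SplitQuaternion) := by
  ext <;> simp [toQ]

/-- For nonzero lightlike split quaternions `a = c₁ + c₂j` and `b = u₁ + u₂j`, the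
equation `a x b = d` is solvable iff `(1 + (c₂/c̄₁)j) d (1 + (u₂/u₁)j) = 4d`, in which
case the solutions are exactly
`x = c̄₁ d ū₁/(4|c₁|²|u₁|²) + y − (1/4)(1 + (c₂/c₁)j) y (1 + (u₂/ū₁)j)`, `y ∈ ℍₛ`. -/
theorem axb_eq_d_solvable (c₁ c₂ u₁ u₂ : ℂ) (hc : c₁ ≠ 0) (hu : u₁ ≠ 0)
    (hla : ‖c₁‖ = ‖c₂‖) (hlb : ‖u₁‖ = ‖u₂‖)
    (a b d : SplitQuaternion) (ha : a = toQ c₁ + toQ c₂ * qj)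
    (hb : b = toQ u₁ + toQ u₂ * qj) :
    ((∃ x : SplitQuaternion, a * x * b = d) ↔
        (1 + toQ (c₂ / starRingEnd ℂ c₁) * qj) * d * (1 + toQ (u₂ / u₁) * qj) = 4 * d) ∧
      ((1 + toQ (c₂ / starRingEnd ℂ c₁) * qj) * d * (1 + toQ (u₂ / u₁) * qj) = 4 * d →
        {x : SplitQuaternion | a * x * b = d} =
          {x : SplitQuaternion | ∃ y : SplitQuaternion,
            x = ((4 * ‖c₁‖ ^ 2 * ‖u₁‖ ^ 2)⁻¹ : ℝ) •
                  (toQ (starRingEnd ℂ c₁) * d * toQ (starRingEnd ℂ u₁)) + y -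
                (1 / 4 : ℝ) •
                  ((1 + toQ (c₂ / c₁) * qj) * y * (1 + toQ (u₂ / starRingEnd ℂ u₁) * qj))}) := by
  -- complex facts
  have hKc : K c₁ ≠ 0 := by simpa using hc
  have hKu : K u₁ ≠ 0 := by simpa using hu
  have hcc : c₂ * K c₂ = c₁ * K c₁ := by
    rw [Complex.mul_conj, Complex.mul_conj]
    have : Complex.normSq c₁ = Complex.normSq c₂ := by
      have h2 := congrArg (· ^ 2) hla
      simpa [Complex.sq_norm] using h2
    exact_mod_cast this.symm
  have huu : u₂ * K u₂ = u₁ * K u₁ := by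
    rw [Complex.mul_conj, Complex.mul_conj]
    have : Complex.normSq u₁ = Complex.normSq u₂ := by
      have h2 := congrArg (· ^ 2) hlb
      simpa [Complex.sq_norm] using h2
    exact_mod_cast this.symm
  have htc1 : c₂ / K c₁ * K c₁ = c₂ := div_mul_cancel₀ _ hKc
  have htc2 : c₂ / K c₁ * K c₂ = c₁ := by field_simp; linear_combination hcc
  have hus : u₁ * (u₂ / u₁) = u₂ := by field_simp
  have hus2 : u₂ * K (u₂ / u₁) = u₁ := by
    rw [map_div₀]; field_simp; linear_combination huu
  have hct' : c₁ * (c₂ / c₁) = c₂ := by field_simp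
  have hc2t' : c₂ * K (c₂ / c₁) = c₁ := by
    rw [map_div₀]; field_simp; linear_combination hcc
  have hs'1 : u₂ / K u₁ * K u₁ = u₂ := div_mul_cancel₀ _ hKu
  have hs'2 : u₂ / K u₁ * K u₂ = u₁ := by field_simp; linear_combination huu
  -- abbreviations
  set E : SplitQuaternion := 1 + toQ (c₂ / K c₁) * qj with hE
  set F : SplitQuaternion := 1 + toQ (u₂ / u₁) * qj with hF
  set E' : SplitQuaternion := 1 + toQ (c₂ / c₁) * qj with hE'
  set F' : SplitQuaternion := 1 + toQ (u₂ / K u₁) * qj with hF'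
  -- quaternion identities
  have hEa : E * a = 2 * a := by
    rw [hE, ha, add_mul, one_mul, L1, htc2, htc1, two_mul]
  have hbF : b * F = 2 * b := by
    rw [hF, hb, mul_add, mul_one, L2, hus2, hus, two_mul]
  have haE' : a * E' = 2 * a := by
    rw [hE', ha, mul_add, mul_one, L2, hc2t', hct', two_mul]
  have hF'b : F' * b = 2 * b := by
    rw [hF', hb, add_mul, one_mul, L1, hs'2, hs'1, two_mul]
  have haEc : E * toQ c₁ = a := by
    rw [hE, ha, add_mul, one_mul, L4, htc1]
  have hbuF : toQ u₁ * F = b := by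
    rw [hF, hb, mul_add, mul_one, L5, hus]
  have hE'c : toQ c₁⁻¹ * a = E' := by
    rw [ha, hE', mul_add, ← toQ_mul, ← mul_assoc, ← toQ_mul,
      inv_mul_cancel₀ hc, toQ_one, inv_mul_eq_div]
  have hF'c : b * toQ u₁⁻¹ = F' := by
    rw [hb, hF', add_mul, ← toQ_mul, L4, mul_inv_cancel₀ hu, toQ_one, map_inv₀,
      ← div_eq_mul_inv]
  -- scalar facts
  have h4 : ∀ q : SplitQuaternion, (4:ℝ) • q = 4 * q := fun q => by
    rw [Algebra.smul_def, map_ofNat]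
  have hcc1 : a * toQ (K c₁) = Complex.normSq c₁ • E := by
    rw [← haEc, mul_assoc, ← toQ_mul, Complex.mul_conj, toQ_ofReal,
      mul_smul_comm, mul_one]
  have hcc2 : toQ (K u₁) * b = Complex.normSq u₁ • F := by
    rw [← hbuF, ← mul_assoc, ← toQ_mul, mul_comm (K u₁) u₁, Complex.mul_conj,
      toQ_ofReal, smul_mul_assoc, one_mul]
  set r : ℝ := (4 * ‖c₁‖ ^ 2 * ‖u₁‖ ^ 2)⁻¹ with hr
  set x₀ : SplitQuaternion := r • (toQ (K c₁) * d * toQ (K u₁)) with hx₀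
  -- the zero lemma
  have hzero : ∀ z : SplitQuaternion, a * z * b = 0 → E' * z * F' = 0 := by
    intro z hz
    rw [← hE'c, ← hF'c]
    calc toQ c₁⁻¹ * a * z * (b * toQ u₁⁻¹)
        = toQ c₁⁻¹ * (a * z * b) * toQ u₁⁻¹ := by noncomm_ring
      _ = 0 := by rw [hz, mul_zero, zero_mul]
  -- key computation
  have hkey : ∀ (h4d : E * d * F = 4 * d), a * x₀ * b = d := by
    intro h4d
    rw [hx₀, mul_smul_comm, smul_mul_assoc]
    have : a * (toQ (K c₁) * d * toQ (K u₁)) * b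
        = (Complex.normSq c₁ * Complex.normSq u₁) • (E * d * F) := by
      calc a * (toQ (K c₁) * d * toQ (K u₁)) * b
          = (a * toQ (K c₁)) * d * (toQ (K u₁) * b) := by noncomm_ring
        _ = (Complex.normSq c₁ • E) * d * (Complex.normSq u₁ • F) := by
            rw [hcc1, hcc2]
        _ = (Complex.normSq c₁ * Complex.normSq u₁) • (E * d * F) := by
            rw [smul_mul_assoc, smul_mul_assoc, mul_smul_comm, smul_smul]
    rw [this, h4d, ← h4 d, smul_smul, smul_smul]
    have : r * (Complex.normSq c₁ * Complex.normSq u₁) * 4 = 1 := by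
      rw [hr, Complex.sq_norm, Complex.sq_norm]
      have h1 : Complex.normSq c₁ ≠ 0 := (Complex.normSq_pos.mpr hc).ne'
      have h2 : Complex.normSq u₁ ≠ 0 := (Complex.normSq_pos.mpr hu).ne'
      field_simp
    rw [this, one_smul]
  constructor
  · constructor
    · rintro ⟨x, hx⟩
      calc E * d * F = (E * a) * x * (b * F) := by rw [← hx]; noncomm_ring
        _ = (2 * a) * x * (2 * b) := by rw [hEa, hbF]
        _ = 4 * (a * x * b) := by noncomm_ring
        _ = 4 * d := by rw [hx]
    · intro h4d
      exact ⟨x₀, hkey h4d⟩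
  · intro h4d
    ext x
    simp only [Set.mem_setOf_eq]
    constructor
    · intro hx
      refine ⟨x - x₀, ?_⟩
      have hz : a * (x - x₀) * b = 0 := by
        rw [mul_sub, sub_mul, hx, hkey h4d, sub_self]
      rw [hzero _ hz, smul_zero, sub_zero]; abel
    · rintro ⟨y, rfl⟩
      have hE'y : a * (E' * y * F') * b = 4 * (a * y * b) := by
        calc a * (E' * y * F') * b = (a * E') * y * (F' * b) := by noncomm_ring
          _ = (2 * a) * y * (2 * b) := by rw [haE', hF'b]
          _ = 4 * (a * y * b) := by noncomm_ring
      calc a * (x₀ + y - (1/4:ℝ) • (E' * y * F')) * b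
          = a * x₀ * b + a * y * b - (1/4:ℝ) • (a * (E' * y * F') * b) := by
            rw [mul_sub, sub_mul, mul_add, add_mul, mul_smul_comm, smul_mul_assoc, mul_smul_comm, smul_mul_assoc]
        _ = d + a * y * b - a * y * b := by
            rw [hkey h4d, hE'y, ← h4 (a * y * b), smul_smul]; norm_num
        _ = d := by abel
end

section
/- Let a = c₁ + c₂j be a nonzero lightlike split quaternion (c₁, c₂ ∈ ℂ, c₁ ≠ 0) and d ∈ ℍₛ. Then the equation a x = d has a solution x ∈ ℍₛ if and only if (1/2)(1 + (c₂/c̄₁) j) · d = d; and in that case the set of all solutions is exactly { ((c̄₁ + c₂j)/(4|c₁|²)) · d + (1/2)(1 − (c₂/c₁) j) · y : y ∈ ℍₛ }. -/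
open Quaternion

set_option linter.unreachableTactic false
set_option linter.unusedTactic false
set_option maxHeartbeats 1000000

lemma key1 (c₁ c₂ : ℂ) (hc : Complex.normSq c₁ ≠ 0)
    (hn : Complex.normSq c₁ = Complex.normSq c₂) :
    (toQ c₁ + toQ c₂ * qj) * (toQ (starRingEnd ℂ c₁) + toQ c₂ * qj)
      = (2 * Complex.normSq c₁) • (1 + toQ (c₂ / starRingEnd ℂ c₁) * qj) := by
  simp only [Complex.normSq_apply] at hn hc
  have hc' : c₁.re ^ 2 + c₁.im ^ 2 ≠ 0 := by rw [sq, sq]; exact hc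
  ext <;>
    simp [toQ, qj, Complex.div_re, Complex.div_im, Complex.normSq_conj, Complex.normSq_apply] <;>
    (try field_simp) <;>
    first
      | ring1
      | linear_combination ((-1))*hn
      | linear_combination ((-c₁.im))*hn
      | linear_combination ((-c₁.re*c₁.im^4 - 2*c₁.re^3*c₁.im^2 - c₁.re^5))*hn
      | linear_combination ((c₁.im^5 + 2*c₁.re^2*c₁.im^3 + c₁.re^4*c₁.im))*hn
      | linear_combination ((c₁.re*c₁.im^4 + 2*c₁.re^3*c₁.im^2 + c₁.re^5))*hn


lemma key2 (c₁ c₂ : ℂ) (hc : Complex.normSq c₁ ≠ 0)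
    (hn : Complex.normSq c₁ = Complex.normSq c₂) :
    (1 + toQ (c₂ / starRingEnd ℂ c₁) * qj) * (toQ c₁ + toQ c₂ * qj)
      = (2:ℝ) • (toQ c₁ + toQ c₂ * qj) := by
  simp only [Complex.normSq_apply] at hn hc
  have hc' : c₁.re ^ 2 + c₁.im ^ 2 ≠ 0 := by rw [sq, sq]; exact hc
  ext <;>
    simp [toQ, qj, Complex.div_re, Complex.div_im, Complex.normSq_conj, Complex.normSq_apply] <;>
    (try field_simp) <;>
    first
      | ring1
      | linear_combination ((-1))*hn
      | linear_combination ((-c₁.im))*hn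
      | linear_combination ((-c₁.re*c₁.im^4 - 2*c₁.re^3*c₁.im^2 - c₁.re^5))*hn
      | linear_combination ((c₁.im^5 + 2*c₁.re^2*c₁.im^3 + c₁.re^4*c₁.im))*hn
      | linear_combination ((c₁.re*c₁.im^4 + 2*c₁.re^3*c₁.im^2 + c₁.re^5))*hn
      | linear_combination (c₁.re)*hn
      | linear_combination (-c₁.re)*hn
      | linear_combination (c₁.im)*hn


lemma key3 (c₁ c₂ : ℂ) (hc : Complex.normSq c₁ ≠ 0)
    (hn : Complex.normSq c₁ = Complex.normSq c₂) :
    (toQ c₁ + toQ c₂ * qj) * (1 - toQ (c₂ / c₁) * qj) = 0 := by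
  simp only [Complex.normSq_apply] at hn hc
  have hc' : c₁.re ^ 2 + c₁.im ^ 2 ≠ 0 := by rw [sq, sq]; exact hc
  ext <;>
    simp [toQ, qj, Complex.div_re, Complex.div_im, Complex.normSq_conj, Complex.normSq_apply] <;>
    (try field_simp) <;>
    first
      | ring1
      | linear_combination ((-1))*hn
      | linear_combination ((-c₁.im))*hn
      | linear_combination ((-c₁.re*c₁.im^4 - 2*c₁.re^3*c₁.im^2 - c₁.re^5))*hn
      | linear_combination ((c₁.im^5 + 2*c₁.re^2*c₁.im^3 + c₁.re^4*c₁.im))*hn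
      | linear_combination ((c₁.re*c₁.im^4 + 2*c₁.re^3*c₁.im^2 + c₁.re^5))*hn
      | linear_combination (c₁.re)*hn
      | linear_combination (-c₁.re)*hn
      | linear_combination (c₁.im)*hn


lemma key4 (c₁ c₂ : ℂ) (hc : Complex.normSq c₁ ≠ 0)
    (hn : Complex.normSq c₁ = Complex.normSq c₂) :
    (toQ (starRingEnd ℂ c₁) + toQ c₂ * qj) * (toQ c₁ + toQ c₂ * qj)
      = (2 * Complex.normSq c₁) • (1 + toQ (c₂ / c₁) * qj) := by
  simp only [Complex.normSq_apply] at hn hc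
  have hc' : c₁.re ^ 2 + c₁.im ^ 2 ≠ 0 := by rw [sq, sq]; exact hc
  ext <;>
    simp [toQ, qj, Complex.div_re, Complex.div_im, Complex.normSq_conj, Complex.normSq_apply] <;>
    (try field_simp) <;>
    first
      | ring1
      | linear_combination ((-1))*hn
      | linear_combination ((-c₁.im))*hn
      | linear_combination ((-c₁.re*c₁.im^4 - 2*c₁.re^3*c₁.im^2 - c₁.re^5))*hn
      | linear_combination ((c₁.im^5 + 2*c₁.re^2*c₁.im^3 + c₁.re^4*c₁.im))*hn
      | linear_combination ((c₁.re*c₁.im^4 + 2*c₁.re^3*c₁.im^2 + c₁.re^5))*hn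


/-- For a nonzero lightlike split quaternion `a = c₁ + c₂j`, the equation `a x = d` is
solvable iff `(1/2)(1 + (c₂/c̄₁)j) d = d`, in which case the solutions are exactly
`x = ((c̄₁ + c₂j)/(4|c₁|²)) d + (1/2)(1 − (c₂/c₁)j) y`, `y ∈ ℍₛ`. -/
theorem ax_eq_d_solvable (c₁ c₂ : ℂ) (hc : c₁ ≠ 0)
    (hla : ‖c₁‖ = ‖c₂‖)
    (a d : SplitQuaternion) (ha : a = toQ c₁ + toQ c₂ * qj) :
    ((∃ x : SplitQuaternion, a * x = d) ↔
        (1 / 2 : ℝ) • ((1 + toQ (c₂ / starRingEnd ℂ c₁) * qj) * d) = d) ∧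
      ((1 / 2 : ℝ) • ((1 + toQ (c₂ / starRingEnd ℂ c₁) * qj) * d) = d →
        {x : SplitQuaternion | a * x = d} =
          {x : SplitQuaternion | ∃ y : SplitQuaternion,
            x = ((4 * ‖c₁‖ ^ 2)⁻¹ : ℝ) •
                  ((toQ (starRingEnd ℂ c₁) + toQ c₂ * qj) * d) +
                (1 / 2 : ℝ) • ((1 - toQ (c₂ / c₁) * qj) * y)}) := by
  have hA : Complex.normSq c₁ ≠ 0 := by
    simpa using (Complex.normSq_pos.mpr hc).ne'
  have hn : Complex.normSq c₁ = Complex.normSq c₂ := by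
    rw [← Complex.sq_norm, ← Complex.sq_norm, hla]
  have habs : (‖c₁‖ ^ 2 : ℝ) = Complex.normSq c₁ := Complex.sq_norm c₁
  have hhalf : ((4 * Complex.normSq c₁)⁻¹ * (2 * Complex.normSq c₁) : ℝ) = 1 / 2 := by
    field_simp
    ring
  have k1 := key1 c₁ c₂ hA hn
  have k2 := key2 c₁ c₂ hA hn
  have k3 := key3 c₁ c₂ hA hn
  have k4 := key4 c₁ c₂ hA hn
  subst ha
  have hx0 : ∀ d' : SplitQuaternion,
      (toQ c₁ + toQ c₂ * qj) *
          (((4 * ‖c₁‖ ^ 2)⁻¹ : ℝ) • ((toQ (starRingEnd ℂ c₁) + toQ c₂ * qj) * d'))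
        = (1 / 2 : ℝ) • ((1 + toQ (c₂ / starRingEnd ℂ c₁) * qj) * d') := by
    intro d'
    rw [mul_smul_comm, ← mul_assoc, k1, smul_mul_assoc, smul_smul, habs, hhalf]
  constructor
  · constructor
    · rintro ⟨x, rfl⟩
      rw [← mul_assoc, k2, smul_mul_assoc, smul_smul]
      norm_num
    · intro h
      exact ⟨_, (hx0 d).trans h⟩
  · intro h
    ext x
    simp only [Set.mem_setOf_eq]
    constructor
    · intro hx
      refine ⟨x, ?_⟩
      have h1 : ((4 * ‖c₁‖ ^ 2)⁻¹ : ℝ) • ((toQ (starRingEnd ℂ c₁) + toQ c₂ * qj) * d)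
          = (1 / 2 : ℝ) • ((1 + toQ (c₂ / c₁) * qj) * x) := by
        rw [← hx, ← mul_assoc, k4, smul_mul_assoc, smul_smul, habs, hhalf]
      rw [h1, add_mul, sub_mul, one_mul]
      module
    · rintro ⟨y, rfl⟩
      rw [mul_add, hx0 d, h, mul_smul_comm, ← mul_assoc, k3, zero_mul, smul_zero, add_zero]
end

section
/- For all split quaternions a = a₀ + a₁i + a₂j + a₃k and b = b₀ + b₁i + b₂j + b₃k, the determinant of the 4×4 real matrix T(a,b) = R(a) − L(b) equals (a₀ − b₀)⁴ − 2(a₀ − b₀)²(K(a) + K(b)) + (K(a) − K(b))², where K(q) = −q₁² + q₂² + q₃². -/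
open Quaternion Matrix

/-- `K(q) = (Im q)² = −q₁² + q₂² + q₃²`, as a real scalar. -/
def Kq (q : SplitQuaternion) : ℝ := -q.imI ^ 2 + q.imJ ^ 2 + q.imK ^ 2

lemma Rm_sub_Lm (a b : SplitQuaternion) : Rm a - Lm b =
  !![a.re - b.re, -a.imI + b.imI, a.imJ - b.imJ, a.imK - b.imK;
     a.imI - b.imI, a.re - b.re, -a.imK - b.imK, a.imJ + b.imJ;
     a.imJ - b.imJ, -a.imK - b.imK, a.re - b.re, a.imI + b.imI;
     a.imK - b.imK, a.imJ + b.imJ, -a.imI - b.imI, a.re - b.re] := by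
  ext i j
  fin_cases i <;> fin_cases j <;> simp [Rm, Lm] <;> ring

set_option maxHeartbeats 1000000 in
lemma det4 (m00 m01 m02 m03 m10 m11 m12 m13 m20 m21 m22 m23 m30 m31 m32 m33 : ℝ) :
    (!![m00,m01,m02,m03; m10,m11,m12,m13; m20,m21,m22,m23; m30,m31,m32,m33]).det =
      m00*(m11*(m22*m33-m23*m32)-m12*(m21*m33-m23*m31)+m13*(m21*m32-m22*m31))
    - m01*(m10*(m22*m33-m23*m32)-m12*(m20*m33-m23*m30)+m13*(m20*m32-m22*m30))
    + m02*(m10*(m21*m33-m23*m31)-m11*(m20*m33-m23*m30)+m13*(m20*m31-m21*m30))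
    - m03*(m10*(m21*m32-m22*m31)-m11*(m20*m32-m22*m30)+m12*(m20*m31-m21*m30)) := by
  simp [Matrix.det_succ_row_zero, Fin.sum_univ_succ, Fin.succAbove, show ((2:Fin 3).castSucc : Fin 4) = 2 from rfl]
  ring

/-- `det(R(a) − L(b)) = (a₀−b₀)⁴ − 2(a₀−b₀)²(K(a)+K(b)) + (K(a)−K(b))²`. -/
theorem det_Rm_sub_Lm (a b : SplitQuaternion) :
    (Rm a - Lm b).det =
      (a.re - b.re) ^ 4 - 2 * (a.re - b.re) ^ 2 * (Kq a + Kq b) + (Kq a - Kq b) ^ 2 := by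
  rw [Rm_sub_Lm, det4, Kq, Kq]
  ring
end

section
/- Let a, b ∈ ℍₛ be non-real split quaternions with a₀ = b₀ and K(a) = K(b). Let T = R(a) − L(b), S = R(a') − L(b'), and c = 2(|Im a|² + |Im b|²) > 0. Then T S T = c·T, S T S = c·S, and both T S and S T are symmetric matrices (equivalently, the matrix S/c satisfies the four Penrose equations for T, i.e. T⁺ = (R(a') − L(b')) / (2(|Im a|² + |Im b|²))). -/
open Quaternion Matrix

/-- The 'prime' of `q`: `q' = q₀ − q₁i + q₂j + q₃k`. -/
def prime (q : SplitQuaternion) : SplitQuaternion := ⟨q.re, -q.imI, q.imJ, q.imK⟩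

/-- `|Im q|² = q₁² + q₂² + q₃²`. -/
def normIm (q : SplitQuaternion) : ℝ := q.imI ^ 2 + q.imJ ^ 2 + q.imK ^ 2

lemma normIm_pos (q : SplitQuaternion) (hq : q.im ≠ 0) : 0 < normIm q := by
  have h : q.imI ≠ 0 ∨ q.imJ ≠ 0 ∨ q.imK ≠ 0 := by
    by_contra h
    push_neg at h
    exact hq (by ext <;> simp [QuaternionAlgebra.im, h.1, h.2.1, h.2.2])
  unfold normIm
  rcases h with h | h | h <;>
    nlinarith [sq_nonneg q.imI, sq_nonneg q.imJ, sq_nonneg q.imK, pow_pos (abs_pos.mpr h) 2, sq_abs q.imI, sq_abs q.imJ, sq_abs q.imK]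

set_option maxHeartbeats 4000000 in
/-- For non-real `a, b ∈ ℍₛ` with `a₀ = b₀` and `K(a) = K(b)`, putting
`T = R(a) − L(b)`, `S = R(a') − L(b')` and `c = 2(|Im a|² + |Im b|²) > 0`, one has
`TST = c·T`, `STS = c·S`, and `TS`, `ST` are symmetric; i.e.
`T⁺ = (R(a') − L(b')) / (2(|Im a|² + |Im b|²))`. -/
theorem mp_inverse_Rm_sub_Lm (a b : SplitQuaternion) (ha : a.im ≠ 0) (hb : b.im ≠ 0)
    (hre : a.re = b.re) (hK : -a.imI ^ 2 + a.imJ ^ 2 + a.imK ^ 2 =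
      -b.imI ^ 2 + b.imJ ^ 2 + b.imK ^ 2)
    (T S : Matrix (Fin 4) (Fin 4) ℝ) (c : ℝ)
    (hT : T = Rm a - Lm b) (hS : S = Rm (prime a) - Lm (prime b))
    (hc : c = 2 * (normIm a + normIm b)) :
    0 < c ∧ T * S * T = c • T ∧ S * T * S = c • S ∧
      (T * S)ᵀ = T * S ∧ (S * T)ᵀ = S * T := by
  subst hT hS hc
  refine ⟨by have := normIm_pos a ha; have := normIm_pos b hb; linarith, ?_, ?_, ?_, ?_⟩
  · ext i j
    fin_cases i <;> fin_cases j <;>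
      simp [Lm, Rm, prime, normIm, Matrix.mul_apply, Fin.sum_univ_four, Matrix.sub_apply, Matrix.smul_apply, Matrix.transpose_apply, smul_eq_mul]
    · linear_combination (b.imK^2 + b.imJ^2 + -b.imI^2 + b.re^2 + (-6)*a.imK*b.imK + a.imK^2 + (-6)*a.imJ*b.imJ + a.imJ^2 + (-2)*a.imI*b.imI + -a.imI^2 + (-2)*a.re*b.re + a.re^2) * hre
    · linear_combination (-b.re*b.imI + 6*a.imK*b.imJ + (-6)*a.imJ*b.imK + a.imI*b.re + a.re*b.imI + -a.re*a.imI) * hre + (-b.imI + -a.imI) * hK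
    · linear_combination (3*b.re*b.imJ + (-2)*a.imK*b.imI + (-3)*a.imJ*b.re + 2*a.imI*b.imK + (-3)*a.re*b.imJ + 3*a.re*a.imJ) * hre + (-b.imJ + -a.imJ) * hK
    · linear_combination (3*b.re*b.imK + (-3)*a.imK*b.re + 2*a.imJ*b.imI + (-2)*a.imI*b.imJ + (-3)*a.re*b.imK + 3*a.re*a.imK) * hre + (-b.imK + -a.imK) * hK
    · linear_combination (b.re*b.imI + 6*a.imK*b.imJ + (-6)*a.imJ*b.imK + -a.imI*b.re + -a.re*b.imI + a.re*a.imI) * hre + (b.imI + a.imI) * hK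
    · linear_combination (b.imK^2 + b.imJ^2 + -b.imI^2 + b.re^2 + 6*a.imK*b.imK + a.imK^2 + 6*a.imJ*b.imJ + a.imJ^2 + (-2)*a.imI*b.imI + -a.imI^2 + (-2)*a.re*b.re + a.re^2) * hre
    · linear_combination (3*b.re*b.imK + 3*a.imK*b.re + (-2)*a.imJ*b.imI + (-2)*a.imI*b.imJ + (-3)*a.re*b.imK + (-3)*a.re*a.imK) * hre + (-b.imK + a.imK) * hK
    · linear_combination ((-3)*b.re*b.imJ + (-2)*a.imK*b.imI + (-3)*a.imJ*b.re + (-2)*a.imI*b.imK + 3*a.re*b.imJ + 3*a.re*a.imJ) * hre + (b.imJ + -a.imJ) * hK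
    · linear_combination (3*b.re*b.imJ + 2*a.imK*b.imI + (-3)*a.imJ*b.re + (-2)*a.imI*b.imK + (-3)*a.re*b.imJ + 3*a.re*a.imJ) * hre + (-b.imJ + -a.imJ) * hK
    · linear_combination (3*b.re*b.imK + 3*a.imK*b.re + 2*a.imJ*b.imI + 2*a.imI*b.imJ + (-3)*a.re*b.imK + (-3)*a.re*a.imK) * hre + (-b.imK + a.imK) * hK
    · linear_combination (b.imK^2 + b.imJ^2 + -b.imI^2 + b.re^2 + 6*a.imK*b.imK + a.imK^2 + (-6)*a.imJ*b.imJ + a.imJ^2 + 2*a.imI*b.imI + -a.imI^2 + (-2)*a.re*b.re + a.re^2) * hre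
    · linear_combination (-b.re*b.imI + (-6)*a.imK*b.imJ + (-6)*a.imJ*b.imK + -a.imI*b.re + a.re*b.imI + a.re*a.imI) * hre + (-b.imI + a.imI) * hK
    · linear_combination (3*b.re*b.imK + (-3)*a.imK*b.re + (-2)*a.imJ*b.imI + 2*a.imI*b.imJ + (-3)*a.re*b.imK + 3*a.re*a.imK) * hre + (-b.imK + -a.imK) * hK
    · linear_combination ((-3)*b.re*b.imJ + 2*a.imK*b.imI + (-3)*a.imJ*b.re + 2*a.imI*b.imK + 3*a.re*b.imJ + 3*a.re*a.imJ) * hre + (b.imJ + -a.imJ) * hK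
    · linear_combination (b.re*b.imI + (-6)*a.imK*b.imJ + (-6)*a.imJ*b.imK + a.imI*b.re + -a.re*b.imI + -a.re*a.imI) * hre + (b.imI + -a.imI) * hK
    · linear_combination (b.imK^2 + b.imJ^2 + -b.imI^2 + b.re^2 + (-6)*a.imK*b.imK + a.imK^2 + 6*a.imJ*b.imJ + a.imJ^2 + 2*a.imI*b.imI + -a.imI^2 + (-2)*a.re*b.re + a.re^2) * hre
  · ext i j
    fin_cases i <;> fin_cases j <;>
      simp [Lm, Rm, prime, normIm, Matrix.mul_apply, Fin.sum_univ_four, Matrix.sub_apply, Matrix.smul_apply, Matrix.transpose_apply, smul_eq_mul]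
    · linear_combination (b.imK^2 + b.imJ^2 + -b.imI^2 + b.re^2 + (-6)*a.imK*b.imK + a.imK^2 + (-6)*a.imJ*b.imJ + a.imJ^2 + (-2)*a.imI*b.imI + -a.imI^2 + (-2)*a.re*b.re + a.re^2) * hre
    · linear_combination (b.re*b.imI + 6*a.imK*b.imJ + (-6)*a.imJ*b.imK + -a.imI*b.re + -a.re*b.imI + a.re*a.imI) * hre + (b.imI + a.imI) * hK
    · linear_combination (3*b.re*b.imJ + 2*a.imK*b.imI + (-3)*a.imJ*b.re + (-2)*a.imI*b.imK + (-3)*a.re*b.imJ + 3*a.re*a.imJ) * hre + (-b.imJ + -a.imJ) * hK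
    · linear_combination (3*b.re*b.imK + (-3)*a.imK*b.re + (-2)*a.imJ*b.imI + 2*a.imI*b.imJ + (-3)*a.re*b.imK + 3*a.re*a.imK) * hre + (-b.imK + -a.imK) * hK
    · linear_combination (-b.re*b.imI + 6*a.imK*b.imJ + (-6)*a.imJ*b.imK + a.imI*b.re + a.re*b.imI + -a.re*a.imI) * hre + (-b.imI + -a.imI) * hK
    · linear_combination (b.imK^2 + b.imJ^2 + -b.imI^2 + b.re^2 + 6*a.imK*b.imK + a.imK^2 + 6*a.imJ*b.imJ + a.imJ^2 + (-2)*a.imI*b.imI + -a.imI^2 + (-2)*a.re*b.re + a.re^2) * hre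
    · linear_combination (3*b.re*b.imK + 3*a.imK*b.re + 2*a.imJ*b.imI + 2*a.imI*b.imJ + (-3)*a.re*b.imK + (-3)*a.re*a.imK) * hre + (-b.imK + a.imK) * hK
    · linear_combination ((-3)*b.re*b.imJ + 2*a.imK*b.imI + (-3)*a.imJ*b.re + 2*a.imI*b.imK + 3*a.re*b.imJ + 3*a.re*a.imJ) * hre + (b.imJ + -a.imJ) * hK
    · linear_combination (3*b.re*b.imJ + (-2)*a.imK*b.imI + (-3)*a.imJ*b.re + 2*a.imI*b.imK + (-3)*a.re*b.imJ + 3*a.re*a.imJ) * hre + (-b.imJ + -a.imJ) * hK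
    · linear_combination (3*b.re*b.imK + 3*a.imK*b.re + (-2)*a.imJ*b.imI + (-2)*a.imI*b.imJ + (-3)*a.re*b.imK + (-3)*a.re*a.imK) * hre + (-b.imK + a.imK) * hK
    · linear_combination (b.imK^2 + b.imJ^2 + -b.imI^2 + b.re^2 + 6*a.imK*b.imK + a.imK^2 + (-6)*a.imJ*b.imJ + a.imJ^2 + 2*a.imI*b.imI + -a.imI^2 + (-2)*a.re*b.re + a.re^2) * hre
    · linear_combination (b.re*b.imI + (-6)*a.imK*b.imJ + (-6)*a.imJ*b.imK + a.imI*b.re + -a.re*b.imI + -a.re*a.imI) * hre + (b.imI + -a.imI) * hK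
    · linear_combination (3*b.re*b.imK + (-3)*a.imK*b.re + 2*a.imJ*b.imI + (-2)*a.imI*b.imJ + (-3)*a.re*b.imK + 3*a.re*a.imK) * hre + (-b.imK + -a.imK) * hK
    · linear_combination ((-3)*b.re*b.imJ + (-2)*a.imK*b.imI + (-3)*a.imJ*b.re + (-2)*a.imI*b.imK + 3*a.re*b.imJ + 3*a.re*a.imJ) * hre + (b.imJ + -a.imJ) * hK
    · linear_combination (-b.re*b.imI + (-6)*a.imK*b.imJ + (-6)*a.imJ*b.imK + -a.imI*b.re + a.re*b.imI + a.re*a.imI) * hre + (-b.imI + a.imI) * hK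
    · linear_combination (b.imK^2 + b.imJ^2 + -b.imI^2 + b.re^2 + (-6)*a.imK*b.imK + a.imK^2 + 6*a.imJ*b.imJ + a.imJ^2 + 2*a.imI*b.imI + -a.imI^2 + (-2)*a.re*b.re + a.re^2) * hre
  · ext i j
    fin_cases i <;> fin_cases j <;>
      simp [Lm, Rm, prime, normIm, Matrix.mul_apply, Fin.sum_univ_four, Matrix.sub_apply, Matrix.smul_apply, Matrix.transpose_apply, smul_eq_mul]
    · ring
    · ring
    · ring
    · ring
    · ring
    · ring
    · ring
    · ring
    · ring
    · ring
    · ring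
    · ring
    · ring
    · ring
    · ring
    · ring
  · ext i j
    fin_cases i <;> fin_cases j <;>
      simp [Lm, Rm, prime, normIm, Matrix.mul_apply, Fin.sum_univ_four, Matrix.sub_apply, Matrix.smul_apply, Matrix.transpose_apply, smul_eq_mul]
    · ring
    · ring
    · ring
    · ring
    · ring
    · ring
    · ring
    · ring
    · ring
    · ring
    · ring
    · ring
    · ring
    · ring
    · ring
    · ring
end

section
/- Let a, b ∈ ℍₛ be non-real split quaternions with Re(a) = Re(b) and K(a) = K(b), and set c = 2(|Im a|² + |Im b|²). Then x ∈ ℍₛ satisfies x a = b x if and only if there exists y ∈ ℍₛ with x = y − (y a a' − b y a' − b' y a + b' b y)/c. -/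
open Quaternion

@[simp] lemma prime_re (q : SplitQuaternion) : (prime q).re = q.re := rfl
@[simp] lemma prime_imI (q : SplitQuaternion) : (prime q).imI = -q.imI := rfl
@[simp] lemma prime_imJ (q : SplitQuaternion) : (prime q).imJ = q.imJ := rfl
@[simp] lemma prime_imK (q : SplitQuaternion) : (prime q).imK = q.imK := rfl

lemma key_identity (a b : SplitQuaternion) (hre : a.re = b.re) (hK : Kq a = Kq b)
    (y : SplitQuaternion) :
    (y * a * prime a - b * y * prime a - prime b * y * a + prime b * b * y) * a -
      b * (y * a * prime a - b * y * prime a - prime b * y * a + prime b * b * y) =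
      (2 * (normIm a + normIm b)) • (y * a - b * y) := by
  simp only [Kq] at hK
  ext <;>
    simp only [QuaternionAlgebra.re_mul, QuaternionAlgebra.imI_mul, QuaternionAlgebra.imJ_mul,
      QuaternionAlgebra.imK_mul, QuaternionAlgebra.re_sub, QuaternionAlgebra.imI_sub,
      QuaternionAlgebra.imJ_sub, QuaternionAlgebra.imK_sub, QuaternionAlgebra.re_add,
      QuaternionAlgebra.imI_add, QuaternionAlgebra.imJ_add, QuaternionAlgebra.imK_add,
      QuaternionAlgebra.re_smul, QuaternionAlgebra.imI_smul, QuaternionAlgebra.imJ_smul,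
      QuaternionAlgebra.imK_smul, prime_re, prime_imI, prime_imJ, prime_imK, normIm,
      smul_eq_mul]
  · linear_combination (1*b.imK*b.imK*y.re + 1*b.imJ*b.imJ*y.re + (-1)*b.imI*b.imI*y.re + 3*b.re*b.imK*y.imK + 3*b.re*b.imJ*y.imJ + (-1)*b.re*b.imI*y.imI + 1*b.re*b.re*y.re + (-6)*a.imK*b.imK*y.re + 6*a.imK*b.imJ*y.imI + (-2)*a.imK*b.imI*y.imJ + (-3)*a.imK*b.re*y.imK + 1*a.imK*a.imK*y.re + (-6)*a.imJ*b.imK*y.imI + (-6)*a.imJ*b.imJ*y.re + 2*a.imJ*b.imI*y.imK + (-3)*a.imJ*b.re*y.imJ + 1*a.imJ*a.imJ*y.re + 2*a.imI*b.imK*y.imJ + (-2)*a.imI*b.imJ*y.imK + (-2)*a.imI*b.imI*y.re + 1*a.imI*b.re*y.imI + (-1)*a.imI*a.imI*y.re + (-3)*a.re*b.imK*y.imK + (-3)*a.re*b.imJ*y.imJ + 1*a.re*b.imI*y.imI + (-2)*a.re*b.re*y.re + 3*a.re*a.imK*y.imK + 3*a.re*a.imJ*y.imJ + (-1)*a.re*a.imI*y.imI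 + 1*a.re*a.re*y.re) * hre + ((-1)*b.imK*y.imK + (-1)*b.imJ*y.imJ + (-1)*b.imI*y.imI + (-1)*a.imK*y.imK + (-1)*a.imJ*y.imJ + (-1)*a.imI*y.imI) * hK
  · linear_combination (1*b.imK*b.imK*y.imI + 1*b.imJ*b.imJ*y.imI + (-1)*b.imI*b.imI*y.imI + 3*b.re*b.imK*y.imJ + (-3)*b.re*b.imJ*y.imK + 1*b.re*b.imI*y.re + 1*b.re*b.re*y.imI + 6*a.imK*b.imK*y.imI + 6*a.imK*b.imJ*y.re + (-2)*a.imK*b.imI*y.imK + 3*a.imK*b.re*y.imJ + 1*a.imK*a.imK*y.imI + (-6)*a.imJ*b.imK*y.re + 6*a.imJ*b.imJ*y.imI + (-2)*a.imJ*b.imI*y.imJ + (-3)*a.imJ*b.re*y.imK + 1*a.imJ*a.imJ*y.imI + (-2)*a.imI*b.imK*y.imK + (-2)*a.imI*b.imJ*y.imJ + (-2)*a.imI*b.imI*y.imI + (-1)*a.imI*b.re*y.re + (-1)*a.imI*a.imI*y.imI + (-3)*a.re*b.imK*y.imJ + 3*a.re*b.imJ*y.imK + (-1)*a.re*b.imI*y.re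 + (-2)*a.re*b.re*y.imI + (-3)*a.re*a.imK*y.imJ + 3*a.re*a.imJ*y.imK + 1*a.re*a.imI*y.re + 1*a.re*a.re*y.imI) * hre + ((-1)*b.imK*y.imJ + 1*b.imJ*y.imK + 1*b.imI*y.re + 1*a.imK*y.imJ + (-1)*a.imJ*y.imK + 1*a.imI*y.re) * hK
  · linear_combination (1*b.imK*b.imK*y.imJ + 1*b.imJ*b.imJ*y.imJ + (-1)*b.imI*b.imI*y.imJ + 3*b.re*b.imK*y.imI + 3*b.re*b.imJ*y.re + (-1)*b.re*b.imI*y.imK + 1*b.re*b.re*y.imJ + 6*a.imK*b.imK*y.imJ + (-6)*a.imK*b.imJ*y.imK + 2*a.imK*b.imI*y.re + 3*a.imK*b.re*y.imI + 1*a.imK*a.imK*y.imJ + (-6)*a.imJ*b.imK*y.imK + (-6)*a.imJ*b.imJ*y.imJ + 2*a.imJ*b.imI*y.imI + (-3)*a.imJ*b.re*y.re + 1*a.imJ*a.imJ*y.imJ + (-2)*a.imI*b.imK*y.re + 2*a.imI*b.imJ*y.imI + 2*a.imI*b.imI*y.imJ + (-1)*a.imI*b.re*y.imK + (-1)*a.imI*a.imI*y.imJ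 + (-3)*a.re*b.imK*y.imI + (-3)*a.re*b.imJ*y.re + 1*a.re*b.imI*y.imK + (-2)*a.re*b.re*y.imJ + (-3)*a.re*a.imK*y.imI + 3*a.re*a.imJ*y.re + 1*a.re*a.imI*y.imK + 1*a.re*a.re*y.imJ) * hre + ((-1)*b.imK*y.imI + (-1)*b.imJ*y.re + (-1)*b.imI*y.imK + 1*a.imK*y.imI + (-1)*a.imJ*y.re + 1*a.imI*y.imK) * hK
  · linear_combination (1*b.imK*b.imK*y.imK + 1*b.imJ*b.imJ*y.imK + (-1)*b.imI*b.imI*y.imK + 3*b.re*b.imK*y.re + (-3)*b.re*b.imJ*y.imI + 1*b.re*b.imI*y.imJ + 1*b.re*b.re*y.imK + (-6)*a.imK*b.imK*y.imK + (-6)*a.imK*b.imJ*y.imJ + 2*a.imK*b.imI*y.imI + (-3)*a.imK*b.re*y.re + 1*a.imK*a.imK*y.imK + (-6)*a.imJ*b.imK*y.imJ + 6*a.imJ*b.imJ*y.imK + (-2)*a.imJ*b.imI*y.re + (-3)*a.imJ*b.re*y.imI + 1*a.imJ*a.imJ*y.imK + 2*a.imI*b.imK*y.imI + 2*a.imI*b.imJ*y.re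 + 2*a.imI*b.imI*y.imK + 1*a.imI*b.re*y.imJ + (-1)*a.imI*a.imI*y.imK + (-3)*a.re*b.imK*y.re + 3*a.re*b.imJ*y.imI + (-1)*a.re*b.imI*y.imJ + (-2)*a.re*b.re*y.imK + 3*a.re*a.imK*y.re + 3*a.re*a.imJ*y.imI + (-1)*a.re*a.imI*y.imJ + 1*a.re*a.re*y.imK) * hre + ((-1)*b.imK*y.re + 1*b.imJ*y.imI + 1*b.imI*y.imJ + (-1)*a.imK*y.re + (-1)*a.imJ*y.imI + (-1)*a.imI*y.imJ) * hK

/-- For non-real `a, b ∈ ℍₛ` with `Re a = Re b` and `K(a) = K(b)`, and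
`c = 2(|Im a|² + |Im b|²)`, the solutions of `x a = b x` are exactly
`x = y − (y a a' − b y a' − b' y a + b' b y)/c`, `y ∈ ℍₛ`. -/
theorem xa_eq_bx_solutions_same_re (a b : SplitQuaternion) (ha : a.im ≠ 0) (hb : b.im ≠ 0)
    (hre : a.re = b.re) (hK : Kq a = Kq b) (c : ℝ) (hc : c = 2 * (normIm a + normIm b)) :
    ∀ x : SplitQuaternion, x * a = b * x ↔
      ∃ y : SplitQuaternion,
        x = y - c⁻¹ • (y * a * prime a - b * y * prime a - prime b * y * a +
          prime b * b * y) := by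
  have hna : 0 < normIm a := by
    rcases lt_or_eq_of_le (show (0:ℝ) ≤ normIm a by unfold normIm; positivity) with h | h
    · exact h
    · exfalso
      apply ha
      have h1 : a.imI = 0 ∧ a.imJ = 0 ∧ a.imK = 0 := by
        unfold normIm at h
        refine ⟨by nlinarith [sq_nonneg a.imI, sq_nonneg a.imJ, sq_nonneg a.imK],
          by nlinarith [sq_nonneg a.imI, sq_nonneg a.imJ, sq_nonneg a.imK],
          by nlinarith [sq_nonneg a.imI, sq_nonneg a.imJ, sq_nonneg a.imK]⟩
      ext <;> simp [QuaternionAlgebra.im, h1.1, h1.2.1, h1.2.2]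
  have hnb : 0 ≤ normIm b := by unfold normIm; positivity
  have hcpos : 0 < c := by rw [hc]; linarith
  have hcne : c ≠ 0 := ne_of_gt hcpos
  intro x
  constructor
  · intro h
    refine ⟨x, ?_⟩
    have hT : x * a * prime a - b * x * prime a - prime b * x * a + prime b * b * x = 0 := by
      have hsplit : x * a * prime a - b * x * prime a - prime b * x * a + prime b * b * x =
          (x * a - b * x) * prime a - prime b * (x * a - b * x) := by noncomm_ring
      rw [hsplit, h, sub_self, zero_mul, mul_zero, sub_zero]
    rw [hT, smul_zero, sub_zero]
  · rintro ⟨y, rfl⟩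
    set T := y * a * prime a - b * y * prime a - prime b * y * a + prime b * b * y with hTdef
    have hkey : T * a - b * T = c • (y * a - b * y) := by
      rw [hTdef, hc]; exact key_identity a b hre hK y
    rw [← sub_eq_zero]
    have expand : (y - c⁻¹ • T) * a - b * (y - c⁻¹ • T) =
        (y * a - b * y) - c⁻¹ • (T * a - b * T) := by
      rw [sub_mul, mul_sub, smul_mul_assoc, mul_smul_comm, smul_sub]; abel
    rw [expand, hkey, smul_smul, inv_mul_cancel₀ hcne, one_smul, sub_self]
end
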